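/- Let (vᵢ)_{i ∈ ℤ} be a bi-infinite path in the Farey graph 𝓕 (so vᵢ is adjacent to vᵢ₊₁ and vᵢ₋₁ ≠ vᵢ₊₁ for all i). Suppose that for every i ∈ ℤ, the distance between vᵢ₋₁ and vᵢ₊₁ in the induced subgraph of 𝓕 on the neighborhood of vᵢ is at least 4. Then for all i < j, the only path in 𝓕 of length j − i from vᵢ to vⱼ is the path vᵢ, vᵢ₊₁, …, vⱼ; that is, (vᵢ) is the unique geodesic through any two of its vertices. -/

import Mathlib

/-- Primitive vectors in `ℤ²`. -/
def PrimVec : Type := {v : Fin 2 → ℤ // IsCoprime (v 0) (v 1)}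

/-- Identify a primitive vector with its negation. -/
def fareySetoid : Setoid PrimVec where
  r v w := v.1 = w.1 ∨ v.1 = -w.1
  iseqv := by
    refine ⟨fun v => Or.inl rfl, ?_, ?_⟩
    · rintro v w (h | h)
      · exact Or.inl h.symm
      · exact Or.inr (by rw [h, neg_neg])
    · rintro u v w (h1 | h1) (h2 | h2)
      · exact Or.inl (h1.trans h2)
      · exact Or.inr (by rw [h1, h2])
      · exact Or.inr (by rw [h1, h2])
      · exact Or.inl (by rw [h1, h2, neg_neg])

/-- Vertices of the Farey graph: primitive vectors of `ℤ²` modulo negation. -/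
def FareyVertex : Type := Quotient fareySetoid

def fareyDet (v w : Fin 2 → ℤ) : ℤ := v 0 * w 1 - v 1 * w 0

lemma fareyDet_neg_left (v w : Fin 2 → ℤ) : fareyDet (-v) w = -fareyDet v w := by
  simp [fareyDet]; ring

lemma fareyDet_neg_right (v w : Fin 2 → ℤ) : fareyDet v (-w) = -fareyDet v w := by
  simp [fareyDet]; ring

/-- The Farey graph. -/
def Farey : SimpleGraph FareyVertex where
  Adj := Quotient.lift₂
    (fun v w : PrimVec => fareyDet v.1 w.1 = 1 ∨ fareyDet v.1 w.1 = -1)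
    (by
      rintro a b a' b' (h1 | h1) (h2 | h2) <;>
        simp only [eq_iff_iff] <;>
        rw [h1, h2] <;>
        simp only [fareyDet_neg_left, fareyDet_neg_right, neg_neg] <;>
        omega)
  symm := by
    constructor
    intro a b
    refine Quotient.inductionOn₂ a b ?_
    intro v w h
    have hd : fareyDet w.1 v.1 = -fareyDet v.1 w.1 := by simp [fareyDet]; ring
    show fareyDet w.1 v.1 = 1 ∨ fareyDet w.1 v.1 = -1
    rcases h with h | h <;> omega
  loopless := by
    constructor
    intro a
    refine Quotient.inductionOn a ?_
    intro v h
    have hd : fareyDet v.1 v.1 = 0 := by simp [fareyDet]; ring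
    rcases (h : fareyDet v.1 v.1 = 1 ∨ fareyDet v.1 v.1 = -1) with h | h <;> omega

/-- The Farey vertex of a primitive vector. -/
def fv (v : Fin 2 → ℤ) (h : IsCoprime (v 0) (v 1)) : FareyVertex :=
  Quotient.mk fareySetoid ⟨v, h⟩

namespace FareyAux

abbrev ZV := Fin 2 → ℤ

lemma fd_sm (x y : ZV) (s t : ℤ) :
    fareyDet (s • x + t • y) = fun z => s * fareyDet x z + t * fareyDet y z := by
  funext z; simp [fareyDet]; ring

lemma fd_add_left (x y z : ZV) : fareyDet (x + y) z = fareyDet x z + fareyDet y z := by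
  simp [fareyDet]; ring

lemma fd_smul_left (t : ℤ) (x z : ZV) : fareyDet (t • x) z = t * fareyDet x z := by
  simp [fareyDet]; ring

lemma fd_add_right (x y z : ZV) : fareyDet x (y + z) = fareyDet x y + fareyDet x z := by
  simp [fareyDet]; ring

lemma fd_smul_right (t : ℤ) (x z : ZV) : fareyDet x (t • z) = t * fareyDet x z := by
  simp [fareyDet]; ring

lemma fd_self (x : ZV) : fareyDet x x = 0 := by simp [fareyDet]; ring

lemma fd_swap (x y : ZV) : fareyDet y x = - fareyDet x y := by simp [fareyDet]; ring

lemma prim_of_det {x y : ZV} (h : fareyDet x y = 1 ∨ fareyDet x y = -1) :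
    IsCoprime (y 0) (y 1) := by
  simp only [fareyDet] at h
  rcases h with h | h
  · exact ⟨-(x 1), x 0, by linarith⟩
  · exact ⟨x 1, -(x 0), by linarith⟩

lemma prim_of_det' {x y : ZV} (h : fareyDet x y = 1 ∨ fareyDet x y = -1) :
    IsCoprime (x 0) (x 1) := by
  apply prim_of_det (x := y)
  rw [fd_swap]; omega

lemma eq_or_neg_of_det_zero {x y : ZV} (hx : IsCoprime (x 0) (x 1))
    (hy : IsCoprime (y 0) (y 1)) (h : fareyDet x y = 0) : y = x ∨ y = -x := by
  simp only [fareyDet] at h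
  obtain ⟨u, w, huw⟩ := hx
  set c := u * y 0 + w * y 1 with hc
  have h0 : y 0 = c * x 0 := by rw [hc]; linear_combination (-(y 0)) * huw - w * h
  have h1 : y 1 = c * x 1 := by rw [hc]; linear_combination (-(y 1)) * huw + u * h
  have hu : IsUnit c := by
    apply IsCoprime.isUnit_of_dvd' hy <;> [exact ⟨x 0, h0⟩; exact ⟨x 1, h1⟩]
  rcases Int.isUnit_iff.mp hu with hc1 | hc1
  · left; funext i; fin_cases i <;> simp [h0, h1, hc1]
  · right; funext i; fin_cases i <;> simp [h0, h1, hc1]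

lemma cramer (A B C : ZV) (h : fareyDet A B = 1 ∨ fareyDet A B = -1) :
    C = (fareyDet A B * fareyDet C B) • A + (fareyDet A B * fareyDet A C) • B := by
  have h1 : fareyDet A B * fareyDet A B = 1 := by rcases h with h | h <;> rw [h] <;> ring
  funext i
  fin_cases i
  · show C 0 = (fareyDet A B * fareyDet C B) * A 0 + (fareyDet A B * fareyDet A C) * B 0
    simp only [fareyDet] at h1 ⊢
    linear_combination (-(C 0)) * h1
  · show C 1 = (fareyDet A B * fareyDet C B) * A 1 + (fareyDet A B * fareyDet A C) * B 1
    simp only [fareyDet] at h1 ⊢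
    linear_combination (-(C 1)) * h1

lemma det_sign_sep {ax bx ay by' : ℤ} (h : (ax * bx) * (ay * by') < 0)
    (hd : ax * by' - bx * ay = 1 ∨ ax * by' - bx * ay = -1) : False := by
  rcases mul_neg_iff.mp h with ⟨h1, h2'⟩ | ⟨h1, h2'⟩
  · rcases mul_pos_iff.mp h1 with ⟨ha, hb⟩ | ⟨ha, hb⟩ <;>
      rcases mul_neg_iff.mp h2' with ⟨hc, hd'⟩ | ⟨hc, hd'⟩ <;>
      rcases hd with e | e <;> nlinarith
  · rcases mul_neg_iff.mp h1 with ⟨ha, hb⟩ | ⟨ha, hb⟩ <;>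
      rcases mul_pos_iff.mp h2' with ⟨hc, hd'⟩ | ⟨hc, hd'⟩ <;>
      rcases hd with e | e <;> nlinarith

end FareyAux
namespace FareyAux

/-- first coordinate (times sign) of `x` in basis `(P, Q)` -/
def ca (P Q x : ZV) : ℤ := fareyDet x Q * fareyDet P Q
/-- second coordinate (times sign) of `x` in basis `(P, Q)` -/
def cb (P Q x : ZV) : ℤ := fareyDet P x * fareyDet P Q

lemma ca_comb (P Q x y : ZV) (s t : ℤ) :
    ca P Q (s • x + t • y) = s * ca P Q x + t * ca P Q y := by
  simp [ca, fareyDet]; ring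

lemma cb_comb (P Q x y : ZV) (s t : ℤ) :
    cb P Q (s • x + t • y) = s * cb P Q x + t * cb P Q y := by
  simp [cb, fareyDet]; ring

lemma ca_neg (P Q x : ZV) : ca P Q (-x) = - ca P Q x := by simp [ca, fareyDet]; ring
lemma cb_neg (P Q x : ZV) : cb P Q (-x) = - cb P Q x := by simp [cb, fareyDet]; ring

lemma ca_P (P Q : ZV) (h2 : fareyDet P Q * fareyDet P Q = 1) : ca P Q P = 1 := h2
lemma ca_Q (P Q : ZV) : ca P Q Q = 0 := by simp [ca, fd_self]
lemma cb_P (P Q : ZV) : cb P Q P = 0 := by simp [cb, fd_self]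
lemma cb_Q (P Q : ZV) (h2 : fareyDet P Q * fareyDet P Q = 1) : cb P Q Q = 1 := h2

lemma coord_det (P Q x y : ZV) (h2 : fareyDet P Q * fareyDet P Q = 1) :
    ca P Q x * cb P Q y - cb P Q x * ca P Q y = fareyDet x y * fareyDet P Q := by
  have key : ca P Q x * cb P Q y - cb P Q x * ca P Q y
      = (fareyDet x y * fareyDet P Q) * (fareyDet P Q * fareyDet P Q) := by
    simp [ca, cb, fareyDet]; ring
  rw [key, h2, mul_one]

/-- the coordinates of `x` determine `x` (used to recover `fareyDet x Q` etc.) -/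
lemma det_from_ca (P Q x : ZV) (h2 : fareyDet P Q * fareyDet P Q = 1) :
    fareyDet x Q = ca P Q x * fareyDet P Q := by
  have : ca P Q x * fareyDet P Q = fareyDet x Q * (fareyDet P Q * fareyDet P Q) := by
    simp [ca]; ring
  rw [this, h2, mul_one]

lemma det_from_cb (P Q x : ZV) (h2 : fareyDet P Q * fareyDet P Q = 1) :
    fareyDet P x = cb P Q x * fareyDet P Q := by
  have : cb P Q x * fareyDet P Q = fareyDet P x * (fareyDet P Q * fareyDet P Q) := by
    simp [cb]; ring
  rw [this, h2, mul_one]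

/-- The invariant carried along pairs of consecutive path vertices. -/
def Inv (P Q x y : ZV) : Prop :=
  0 ≤ ca P Q x ∧ 0 ≤ cb P Q x ∧ 2 * ca P Q x ≤ ca P Q y ∧ 2 * cb P Q x ≤ cb P Q y ∧
    2 ≤ ca P Q y ∧ 1 ≤ cb P Q y

lemma inv_step (P Q x y z : ZV) (hI : Inv P Q x y) (ε s : ℤ)
    (hε : ε = 1 ∨ ε = -1) (hs : 4 ≤ s ∨ s ≤ -4) (hz : z = ε • (x + s • y)) :
    ∃ z', (z' = z ∨ z' = -z) ∧ Inv P Q y z' ∧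
      3 * ca P Q y ≤ ca P Q z' ∧ 3 * cb P Q y ≤ cb P Q z' := by
  obtain ⟨ha0, hb0, ha2, hb2, ha, hb⟩ := hI
  have hε2 : ε * ε = 1 := by rcases hε with h | h <;> rw [h] <;> ring
  have hzc : z = (ε * 1) • x + (ε * s) • y := by
    rw [hz]; funext i; simp only [Pi.smul_apply, Pi.add_apply, Pi.neg_apply, smul_eq_mul]; ring
  rcases hs with hs | hs
  · -- s ≥ 4, take z' = ε • z = x + s • y
    refine ⟨ε • z, ?_, ?_⟩
    · rcases hε with h | h <;> rw [h] <;> simp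
    · have hz' : ε • z = (1 : ℤ) • x + s • y := by
        rw [hzc]; funext i
        simp only [Pi.smul_apply, Pi.add_apply, smul_eq_mul]
        linear_combination (x i + s * y i) * hε2
      have hca : ca P Q (ε • z) = ca P Q x + s * ca P Q y := by
        rw [hz', ca_comb]; ring
      have hcb : cb P Q (ε • z) = cb P Q x + s * cb P Q y := by
        rw [hz', cb_comb]; ring
      have k1 : 4 * ca P Q y ≤ s * ca P Q y :=
        mul_le_mul_of_nonneg_right hs (by linarith)
      have k2 : 4 * cb P Q y ≤ s * cb P Q y :=
        mul_le_mul_of_nonneg_right hs (by linarith)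
      refine ⟨⟨by linarith, by linarith, ?_, ?_, ?_, ?_⟩, ?_, ?_⟩ <;>
        first
          | (rw [hca]; linarith)
          | (rw [hcb]; linarith)
          | linarith
  · -- s ≤ -4, take z' = (-ε) • z = -x + (-s) • y
    refine ⟨(-ε) • z, ?_, ?_⟩
    · rcases hε with h | h <;> rw [h] <;> simp
    · have hz' : (-ε) • z = (-1 : ℤ) • x + (-s) • y := by
        rw [hzc]; funext i
        simp only [Pi.smul_apply, Pi.add_apply, smul_eq_mul]
        linear_combination (-(x i) - s * y i) * hε2
      have hca : ca P Q ((-ε) • z) = - ca P Q x + (-s) * ca P Q y := by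
        rw [hz', ca_comb]; ring
      have hcb : cb P Q ((-ε) • z) = - cb P Q x + (-s) * cb P Q y := by
        rw [hz', cb_comb]; ring
      have k1 : 4 * ca P Q y ≤ (-s) * ca P Q y :=
        mul_le_mul_of_nonneg_right (by linarith) (by linarith)
      have k2 : 4 * cb P Q y ≤ (-s) * cb P Q y :=
        mul_le_mul_of_nonneg_right (by linarith) (by linarith)
      refine ⟨⟨by linarith, by linarith, ?_, ?_, ?_, ?_⟩, ?_, ?_⟩ <;>
        first
          | (rw [hca]; linarith)
          | (rw [hcb]; linarith)
          | linarith

lemma chain (P Q : ZV) (c : ℕ → ZV) (x0 y0 : ZV)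
    (hx0 : x0 = c 0 ∨ x0 = - c 0) (hy0 : y0 = c 1 ∨ y0 = - c 1) (hI0 : Inv P Q x0 y0)
    (hstep : ∀ n : ℕ, ∃ ε s : ℤ, (ε = 1 ∨ ε = -1) ∧ (4 ≤ s ∨ s ≤ -4) ∧
      c (n + 2) = ε • (c n + s • c (n + 1))) :
    ∀ n : ℕ, ∃ x y : ZV, (x = c n ∨ x = - c n) ∧ (y = c (n + 1) ∨ y = - c (n + 1)) ∧
      Inv P Q x y ∧ (n ≠ 0 → 3 * ca P Q x ≤ ca P Q y ∧ 3 * cb P Q x ≤ cb P Q y) := by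
  intro n
  induction n with
  | zero => exact ⟨x0, y0, hx0, hy0, hI0, fun h => absurd rfl h⟩
  | succ n ih =>
    obtain ⟨x, y, hx, hy, hI, -⟩ := ih
    obtain ⟨ε, s, hε, hs, hc⟩ := hstep n
    -- rewrite c (n+2) = ε' • (x + s' • y)
    have hex : ∃ ε' s' : ℤ, (ε' = 1 ∨ ε' = -1) ∧ (4 ≤ s' ∨ s' ≤ -4) ∧
        c (n + 2) = ε' • (x + s' • y) := by
      rcases hx with hx | hx <;> rcases hy with hy | hy
      · exact ⟨ε, s, hε, hs, by simp only [hc, hx, hy]⟩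
      · refine ⟨ε, -s, hε, by omega, ?_⟩
        rw [hc, hx]
        have : c (n + 1) = -y := by rw [hy]; simp
        rw [this]; funext i; simp only [Pi.smul_apply, Pi.add_apply, Pi.neg_apply, smul_eq_mul]; ring
      · refine ⟨-ε, -s, by omega, by omega, ?_⟩
        have hcx : c n = -x := by rw [hx]; simp
        rw [hc, hcx, hy]; funext i; simp only [Pi.smul_apply, Pi.add_apply, Pi.neg_apply, smul_eq_mul]; ring
      · refine ⟨-ε, s, by omega, hs, ?_⟩
        have hcx : c n = -x := by rw [hx]; simp
        have hcy : c (n + 1) = -y := by rw [hy]; simp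
        rw [hc, hcx, hcy]; funext i; simp only [Pi.smul_apply, Pi.add_apply, Pi.neg_apply, smul_eq_mul]; ring
    obtain ⟨ε', s', hε', hs', hc'⟩ := hex
    obtain ⟨z', hz', hI', hga, hgb⟩ := inv_step P Q x y (c (n + 2)) hI ε' s' hε' hs' hc'
    exact ⟨y, z', hy, hz', hI', fun _ => ⟨hga, hgb⟩⟩

end FareyAux
namespace FareyAux

/-- The distinguished fan vertex at `k` (link position `2·σ k` from `V (k-1)`). -/
def Wv (V : ℤ → ZV) (σf : ℤ → ℤ) (k : ℤ) : ZV := V (k - 1) + (2 * σf k) • V k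

/-- the separation function for the edge `{V k, Wv k}` -/
def Sk (V : ℤ → ZV) (σf : ℤ → ℤ) (k : ℤ) (x : ZV) : ℤ :=
  fareyDet x (Wv V σf k) * fareyDet (V k) x

lemma Sk_negx (V : ℤ → ZV) (σf : ℤ → ℤ) (k : ℤ) (x : ZV) :
    Sk V σf k (-x) = Sk V σf k x := by
  simp only [Sk, fareyDet, Pi.neg_apply]; ring

structure SeqHyp (V : ℤ → ZV) (tf εf σf : ℤ → ℤ) : Prop where
  hdet : ∀ m, fareyDet (V m) (V (m + 1)) = 1 ∨ fareyDet (V m) (V (m + 1)) = -1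
  hrec : ∀ m, V (m + 1) = εf m • (V (m - 1) + tf m • V m)
  hε : ∀ m, εf m = 1 ∨ εf m = -1
  hσ : ∀ m, σf m = 1 ∨ σf m = -1
  hσt : ∀ m, 4 ≤ σf m * tf m

namespace SeqHyp

variable {V : ℤ → ZV} {tf εf σf : ℤ → ℤ}

lemma det1 (H : SeqHyp V tf εf σf) (k : ℤ) :
    fareyDet (V (k - 1)) (V k) = 1 ∨ fareyDet (V (k - 1)) (V k) = -1 := by
  have := H.hdet (k - 1)
  rwa [show k - 1 + 1 = k from by ring] at this

lemma det1' (H : SeqHyp V tf εf σf) (k : ℤ) :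
    fareyDet (V k) (V (k - 1)) = 1 ∨ fareyDet (V k) (V (k - 1)) = -1 := by
  have := H.det1 k; rw [fd_swap] at this; omega

lemma detVW (H : SeqHyp V tf εf σf) (k : ℤ) :
    fareyDet (V k) (Wv V σf k) = fareyDet (V k) (V (k - 1)) := by
  rw [Wv, fd_add_right, fd_smul_right, fd_self, mul_zero, add_zero]

lemma detVW1 (H : SeqHyp V tf εf σf) (k : ℤ) :
    fareyDet (V k) (Wv V σf k) = 1 ∨ fareyDet (V k) (Wv V σf k) = -1 := by
  rw [H.detVW k]; exact H.det1' k

/-- determinant of the forward basis -/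
lemma dPQf (H : SeqHyp V tf εf σf) (k : ℤ) :
    fareyDet (σf k • V k) (Wv V σf k) = σf k * fareyDet (V k) (V (k - 1)) := by
  rw [fd_smul_left, H.detVW k]

lemma dPQf1 (H : SeqHyp V tf εf σf) (k : ℤ) :
    fareyDet (σf k • V k) (Wv V σf k) = 1 ∨ fareyDet (σf k • V k) (Wv V σf k) = -1 := by
  rw [H.dPQf k]
  rcases H.hσ k with h | h <;> rcases H.det1' k with h' | h' <;> rw [h, h'] <;> omega

lemma h2f (H : SeqHyp V tf εf σf) (k : ℤ) :
    fareyDet (σf k • V k) (Wv V σf k) * fareyDet (σf k • V k) (Wv V σf k) = 1 := by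
  rcases H.dPQf1 k with h | h <;> rw [h] <;> ring

lemma dPQb (H : SeqHyp V tf εf σf) (k : ℤ) :
    fareyDet ((-σf k) • V k) (Wv V σf k) = -(σf k * fareyDet (V k) (V (k - 1))) := by
  rw [fd_smul_left, H.detVW k]; ring

lemma dPQb1 (H : SeqHyp V tf εf σf) (k : ℤ) :
    fareyDet ((-σf k) • V k) (Wv V σf k) = 1 ∨
      fareyDet ((-σf k) • V k) (Wv V σf k) = -1 := by
  rw [H.dPQb k]
  rcases H.hσ k with h | h <;> rcases H.det1' k with h' | h' <;> rw [h, h'] <;> omega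

lemma h2b (H : SeqHyp V tf εf σf) (k : ℤ) :
    fareyDet ((-σf k) • V k) (Wv V σf k) * fareyDet ((-σf k) • V k) (Wv V σf k) = 1 := by
  rcases H.dPQb1 k with h | h <;> rw [h] <;> ring

/-- algebraic helper: the first forward pair -/
lemma fwd_y0 (A B C : ZV) (ε t σ : ℤ) (hε2 : ε * ε = 1) (hσ2 : σ * σ = 1)
    (h : C = ε • (A + t • B)) :
    ε • C = (σ * t - 2) • (σ • B) + (1 : ℤ) • (A + (2 * σ) • B) := by
  funext i
  have hi := congrFun h i
  simp only [Pi.smul_apply, Pi.add_apply, smul_eq_mul] at hi ⊢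
  linear_combination ε * hi + (-(t * B i)) * hσ2 + (A i + t * B i) * hε2

/-- algebraic helper: reversing the recurrence -/
lemma rec_rev (A B C : ZV) (ε t : ℤ) (hε2 : ε * ε = 1) (h : C = ε • (A + t • B)) :
    A = ε • (C + (-(t * ε)) • B) := by
  funext i
  have hi := congrFun h i
  simp only [Pi.smul_apply, Pi.add_apply, smul_eq_mul] at hi ⊢
  linear_combination (-ε) * hi + (-(A i)) * hε2

lemma fwd (H : SeqHyp V tf εf σf) (k : ℤ) : ∀ n : ℕ, ∃ x y : ZV,
    (x = V (k + n) ∨ x = -V (k + n)) ∧ (y = V (k + n + 1) ∨ y = -V (k + n + 1)) ∧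
    Inv (σf k • V k) (Wv V σf k) x y ∧
    (n ≠ 0 → 3 * ca (σf k • V k) (Wv V σf k) x ≤ ca (σf k • V k) (Wv V σf k) y ∧
             3 * cb (σf k • V k) (Wv V σf k) x ≤ cb (σf k • V k) (Wv V σf k) y) := by
  set P := σf k • V k with hP
  set Q := Wv V σf k with hQ
  have h2 := H.h2f k
  rw [← hP, ← hQ] at h2
  have hσ2 : σf k * σf k = 1 := by rcases H.hσ k with h | h <;> rw [h] <;> ring
  have hε2 : εf k * εf k = 1 := by rcases H.hε k with h | h <;> rw [h] <;> ring
  -- the base pair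
  have hy0eq : εf k • V (k + 1) = (σf k * tf k - 2) • P + (1 : ℤ) • Q := by
    rw [hP, hQ]
    exact fwd_y0 (V (k - 1)) (V k) (V (k + 1)) (εf k) (tf k) (σf k) hε2 hσ2 (H.hrec k)
  have hca0 : ca P Q (εf k • V (k + 1)) = σf k * tf k - 2 := by
    rw [hy0eq, ca_comb, ca_P P Q h2, ca_Q]; ring
  have hcb0 : cb P Q (εf k • V (k + 1)) = 1 := by
    rw [hy0eq, cb_comb, cb_P, cb_Q P Q h2]; ring
  have hσt := H.hσt k
  have hI0 : Inv P Q P (εf k • V (k + 1)) := by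
    refine ⟨?_, ?_, ?_, ?_, ?_, ?_⟩
    · rw [ca_P P Q h2]; omega
    · rw [cb_P]
    · rw [ca_P P Q h2, hca0]; omega
    · rw [cb_P, hcb0]; omega
    · rw [hca0]; omega
    · rw [hcb0]
  have hx0 : P = V (k + ((0:ℕ):ℤ)) ∨ P = -V (k + ((0:ℕ):ℤ)) := by
    rw [show (k + ((0:ℕ):ℤ)) = k from by push_cast; ring, hP]
    rcases H.hσ k with h | h <;> rw [h]
    · left; rw [one_smul]
    · right; rw [neg_one_smul]
  have hy0 : εf k • V (k + 1) = V (k + ((1:ℕ):ℤ)) ∨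
      εf k • V (k + 1) = -V (k + ((1:ℕ):ℤ)) := by
    rw [show (k + ((1:ℕ):ℤ)) = k + 1 from by push_cast; ring]
    rcases H.hε k with h | h <;> rw [h]
    · left; rw [one_smul]
    · right; rw [neg_one_smul]
  have hstep : ∀ n : ℕ, ∃ ε s : ℤ, (ε = 1 ∨ ε = -1) ∧ (4 ≤ s ∨ s ≤ -4) ∧
      V (k + ((n + 2 : ℕ):ℤ)) = ε • (V (k + (n:ℤ)) + s • V (k + ((n + 1 : ℕ):ℤ))) := by
    intro n
    refine ⟨εf (k + n + 1), tf (k + n + 1), H.hε _, ?_, ?_⟩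
    · have h1 := H.hσt (k + n + 1)
      rcases H.hσ (k + n + 1) with h | h <;> rw [h] at h1 <;> omega
    · have hr := H.hrec (k + n + 1)
      rw [show (k + (n:ℤ) + 1) - 1 = k + (n:ℤ) from by ring] at hr
      rw [show (k + ((n + 2 : ℕ):ℤ)) = k + (n:ℤ) + 1 + 1 from by push_cast; ring,
        show (k + ((n + 1 : ℕ):ℤ)) = k + (n:ℤ) + 1 from by push_cast; ring]
      exact hr
  have key := chain P Q (fun n : ℕ => V (k + (n:ℤ))) P (εf k • V (k + 1)) hx0 hy0 hI0 hstep
  intro n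
  obtain ⟨x, y, hx, hy, hI, hgap⟩ := key n
  beta_reduce at hx hy
  rw [show (k + ((n + 1 : ℕ):ℤ)) = k + (n:ℤ) + 1 from by push_cast; ring] at hy
  exact ⟨x, y, hx, hy, hI, hgap⟩

/-- algebraic helper: base pair of the backward chain -/
lemma bwd_y0 (A B : ZV) (σ : ℤ) :
    A = (2:ℤ) • ((-σ) • B) + (1:ℤ) • (A + (2 * σ) • B) := by
  funext i
  simp only [Pi.smul_apply, Pi.add_apply, smul_eq_mul]
  ring

lemma bwd (H : SeqHyp V tf εf σf) (k : ℤ) : ∀ n : ℕ, ∃ x y : ZV,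
    (x = V (k - n) ∨ x = -V (k - n)) ∧ (y = V (k - n - 1) ∨ y = -V (k - n - 1)) ∧
    Inv ((-σf k) • V k) (Wv V σf k) x y ∧
    (n ≠ 0 → 3 * ca ((-σf k) • V k) (Wv V σf k) x ≤ ca ((-σf k) • V k) (Wv V σf k) y ∧
             3 * cb ((-σf k) • V k) (Wv V σf k) x ≤ cb ((-σf k) • V k) (Wv V σf k) y) := by
  set P := (-σf k) • V k with hP
  set Q := Wv V σf k with hQ
  have h2 := H.h2b k
  rw [← hP, ← hQ] at h2
  have hε2 : ∀ m : ℤ, εf m * εf m = 1 := by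
    intro m; rcases H.hε m with h | h <;> rw [h] <;> ring
  have hy0eq : V (k - 1) = (2:ℤ) • P + (1:ℤ) • Q := by
    rw [hP, hQ, Wv]; exact bwd_y0 (V (k - 1)) (V k) (σf k)
  have hca0 : ca P Q (V (k - 1)) = 2 := by
    rw [hy0eq, ca_comb, ca_P P Q h2, ca_Q]; ring
  have hcb0 : cb P Q (V (k - 1)) = 1 := by
    rw [hy0eq, cb_comb, cb_P, cb_Q P Q h2]; ring
  have hI0 : Inv P Q P (V (k - 1)) := by
    refine ⟨?_, ?_, ?_, ?_, ?_, ?_⟩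
    · rw [ca_P P Q h2]; omega
    · rw [cb_P]
    · rw [ca_P P Q h2, hca0]; omega
    · rw [cb_P, hcb0]; omega
    · rw [hca0]
    · rw [hcb0]
  have hx0 : P = V (k - ((0:ℕ):ℤ)) ∨ P = -V (k - ((0:ℕ):ℤ)) := by
    rw [show (k - ((0:ℕ):ℤ)) = k from by push_cast; ring, hP]
    rcases H.hσ k with h | h <;> rw [h]
    · right; rw [show -(1:ℤ) • V k = (-1:ℤ) • V k from by norm_num, neg_one_smul]
    · left; rw [show -(-1:ℤ) • V k = (1:ℤ) • V k from by norm_num, one_smul]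
  have hy0 : V (k - 1) = V (k - ((1:ℕ):ℤ)) ∨ V (k - 1) = -V (k - ((1:ℕ):ℤ)) := by
    rw [show (k - ((1:ℕ):ℤ)) = k - 1 from by push_cast; ring]
    exact Or.inl rfl
  have hstep : ∀ n : ℕ, ∃ ε s : ℤ, (ε = 1 ∨ ε = -1) ∧ (4 ≤ s ∨ s ≤ -4) ∧
      V (k - ((n + 2 : ℕ):ℤ)) = ε • (V (k - (n:ℤ)) + s • V (k - ((n + 1 : ℕ):ℤ))) := by
    intro n
    set m := k - (n:ℤ) - 1 with hm
    refine ⟨εf m, -(tf m * εf m), H.hε m, ?_, ?_⟩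
    · have h1 := H.hσt m
      rcases H.hσ m with h | h <;> rcases H.hε m with h' | h' <;>
        rw [h] at h1 <;> rw [h'] <;> omega
    · have hr := H.hrec m
      rw [show m + 1 = k - (n:ℤ) from by rw [hm]; ring,
        show m - 1 = k - ((n + 2 : ℕ):ℤ) from by rw [hm]; push_cast; ring] at hr
      have := rec_rev (V (k - ((n + 2 : ℕ):ℤ))) (V m) (V (k - (n:ℤ)))
        (εf m) (tf m) (hε2 m) hr
      rw [show (k - ((n + 1 : ℕ):ℤ)) = m from by rw [hm]; push_cast; ring]
      exact this
  have key := chain P Q (fun n : ℕ => V (k - (n:ℤ))) P (V (k - 1)) hx0 hy0 hI0 hstep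
  intro n
  obtain ⟨x, y, hx, hy, hI, hgap⟩ := key n
  beta_reduce at hx hy
  rw [show (k - ((n + 1 : ℕ):ℤ)) = k - (n:ℤ) - 1 from by push_cast; ring] at hy
  exact ⟨x, y, hx, hy, hI, hgap⟩

end SeqHyp
end FareyAux
namespace FareyAux

lemma ca_add (P Q x y : ZV) : ca P Q (x + y) = ca P Q x + ca P Q y := by
  simp [ca, fareyDet]; ring

lemma ca_smul (P Q x : ZV) (t : ℤ) : ca P Q (t • x) = t * ca P Q x := by
  simp [ca, fareyDet]; ring

lemma cb_add (P Q x y : ZV) : cb P Q (x + y) = cb P Q x + cb P Q y := by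
  simp [cb, fareyDet]; ring

lemma cb_smul (P Q x : ZV) (t : ℤ) : cb P Q (t • x) = t * cb P Q x := by
  simp [cb, fareyDet]; ring

lemma Wv_def (V : ℤ → ZV) (σf : ℤ → ℤ) (k : ℤ) :
    Wv V σf k = V (k - 1) + (2 * σf k) • V k := rfl

/-- `ca` of two representatives of the same class agree up to sign -/
lemma ca_rep (P Q : ZV) {x u : ZV} (hx : x = u ∨ x = -u) :
    ca P Q u = ca P Q x ∨ ca P Q u = - ca P Q x := by
  rcases hx with rfl | rfl
  · exact Or.inl rfl
  · right; rw [ca_neg, neg_neg]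

/-- if a rep of `w` has `|ca| ≥ 2` then `|det(Q, w)| ≥ 2`. -/
lemma absdet_ge (P Q y w : ZV) (h2 : fareyDet P Q * fareyDet P Q = 1)
    (hca : 2 ≤ ca P Q y ∨ ca P Q y ≤ -2) (hy : y = w ∨ y = -w) :
    2 ≤ fareyDet Q w ∨ fareyDet Q w ≤ -2 := by
  have hPQ : IsUnit (fareyDet P Q) := IsUnit.of_mul_eq_one _ h2
  rw [Int.isUnit_iff] at hPQ
  have hd := det_from_ca P Q y h2
  have hsw : fareyDet Q w = - fareyDet w Q := by rw [fd_swap]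
  rcases hy with rfl | rfl
  · rcases hPQ with h | h <;> rw [h] at hd <;> omega
  · rw [fareyDet_neg_left] at hd
    rcases hPQ with h | h <;> rw [h] at hd <;> omega

/-- the separation: adjacent vertices cannot be strictly on opposite sides -/
lemma sep_jump (P Q x y : ZV) (h2 : fareyDet P Q * fareyDet P Q = 1)
    (hxy : fareyDet x y = 1 ∨ fareyDet x y = -1)
    (hS : (fareyDet x Q * fareyDet P x) * (fareyDet y Q * fareyDet P y) < 0) : False := by
  have hPQ : IsUnit (fareyDet P Q) := IsUnit.of_mul_eq_one _ h2
  rw [Int.isUnit_iff] at hPQ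
  have e := coord_det P Q x y h2
  have hcacb : (ca P Q x * cb P Q x) * (ca P Q y * cb P Q y)
      = ((fareyDet x Q * fareyDet P x) * (fareyDet y Q * fareyDet P y))
        * ((fareyDet P Q * fareyDet P Q) * (fareyDet P Q * fareyDet P Q)) := by
    simp [ca, cb]; ring
  rw [h2, mul_one, mul_one] at hcacb
  apply det_sign_sep (ax := ca P Q x) (bx := cb P Q x) (ay := ca P Q y) (by' := cb P Q y)
  · rw [hcacb]; exact hS
  · rw [e]; rcases hxy with h | h <;> rcases hPQ with h' | h' <;> rw [h, h'] <;> omega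

namespace SeqHyp

variable {V : ℤ → ZV} {tf εf σf : ℤ → ℤ}

/-- `|det(W k, V m)| ≥ 2` for `m ≠ k`. -/
lemma detWV (H : SeqHyp V tf εf σf) (k m : ℤ) (hm : m ≠ k) :
    2 ≤ fareyDet (Wv V σf k) (V m) ∨ fareyDet (Wv V σf k) (V m) ≤ -2 := by
  rcases lt_or_gt_of_ne hm with hlt | hgt
  · -- m ≤ k - 1 : backward chain
    set n : ℕ := (k - 1 - m).toNat with hn
    have hnn : k - (n:ℤ) - 1 = m := by omega
    obtain ⟨x, y, hx, hy, hI, -⟩ := H.bwd k n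
    rw [hnn] at hy
    exact absdet_ge _ _ y (V m) (H.h2b k) (Or.inl hI.2.2.2.2.1) hy
  · -- m ≥ k + 1 : forward chain
    set n : ℕ := (m - k - 1).toNat with hn
    have hnn : k + (n:ℤ) + 1 = m := by omega
    obtain ⟨x, y, hx, hy, hI, -⟩ := H.fwd k n
    rw [hnn] at hy
    exact absdet_ge _ _ y (V m) (H.h2f k) (Or.inl hI.2.2.2.2.1) hy

/-- `|det(W k, W k')| ≥ 2` for `k ≠ k'`. -/
lemma detWW (H : SeqHyp V tf εf σf) (k k' : ℤ) (hk : k ≠ k') :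
    2 ≤ fareyDet (Wv V σf k) (Wv V σf k') ∨ fareyDet (Wv V σf k) (Wv V σf k') ≤ -2 := by
  have hσ2 : σf k' = 1 ∨ σf k' = -1 := H.hσ k'
  rcases lt_or_gt_of_ne hk with hgt | hlt
  · -- k' ≥ k + 1 : forward chain, pair (V (k'-1), V k')
    set n : ℕ := (k' - 1 - k).toNat with hn
    have h1 : k + (n:ℤ) = k' - 1 := by omega
    have h2 : k + (n:ℤ) + 1 = k' := by omega
    obtain ⟨x, y, hx, hy, hI, -⟩ := H.fwd k n
    rw [h1] at hx; rw [h2] at hy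
    set P := σf k • V k
    set Q := Wv V σf k
    have e1 := ca_rep P Q hx
    have e2 := ca_rep P Q hy
    have hWca : ca P Q (Wv V σf k') = ca P Q (V (k' - 1)) + (2 * σf k') * ca P Q (V k') := by
      rw [Wv_def, ca_add, ca_smul]
    have ha0 : 0 ≤ ca P Q x := hI.1
    have ha2 : 2 * ca P Q x ≤ ca P Q y := hI.2.2.1
    have ha : 2 ≤ ca P Q y := hI.2.2.2.2.1
    have hbound : 2 ≤ ca P Q (Wv V σf k') ∨ ca P Q (Wv V σf k') ≤ -2 := by
      rw [hWca]
      rcases e1 with e1 | e1 <;> rcases e2 with e2 | e2 <;> rw [e1, e2] <;>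
        rcases hσ2 with h | h <;> rw [h] <;> omega
    exact absdet_ge P Q (Wv V σf k') (Wv V σf k') (H.h2f k) hbound (Or.inl rfl)
  · -- k' ≤ k - 1 : backward chain, pair (V k', V (k'-1)) at n'+1
    set n' : ℕ := (k - k' - 1).toNat with hn
    have h1 : k - ((n' + 1 : ℕ):ℤ) = k' := by push_cast; omega
    have h2 : k - ((n' + 1 : ℕ):ℤ) - 1 = k' - 1 := by push_cast; omega
    have h3 : k - (n':ℤ) - 1 = k' := by omega
    obtain ⟨x, y, hx, hy, hI, hgap⟩ := H.bwd k (n' + 1)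
    obtain ⟨x', y', hx', hy', hI', -⟩ := H.bwd k n'
    rw [h1] at hx; rw [h2] at hy; rw [h3] at hy'
    set P := (-σf k) • V k
    set Q := Wv V σf k
    -- ca x ≥ 2 : from the previous pair
    have hxval : 2 ≤ ca P Q x := by
      have r1 := ca_rep P Q hx
      have r2 := ca_rep P Q hy'
      have h22 : 2 ≤ ca P Q y' := hI'.2.2.2.2.1
      have h0 : 0 ≤ ca P Q x := hI.1
      rcases r1 with r1 | r1 <;> rcases r2 with r2 | r2 <;> omega
    have hgap' := hgap (Nat.succ_ne_zero n')
    have e1 := ca_rep P Q hy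
    have e2 := ca_rep P Q hx
    have hWca : ca P Q (Wv V σf k') = ca P Q (V (k' - 1)) + (2 * σf k') * ca P Q (V k') := by
      rw [Wv_def, ca_add, ca_smul]
    have ha : 2 ≤ ca P Q y := hI.2.2.2.2.1
    have hga : 3 * ca P Q x ≤ ca P Q y := hgap'.1
    have hbound : 2 ≤ ca P Q (Wv V σf k') ∨ ca P Q (Wv V σf k') ≤ -2 := by
      rw [hWca]
      rcases e1 with e1 | e1 <;> rcases e2 with e2 | e2 <;> rw [e1, e2] <;>
        rcases hσ2 with h | h <;> rw [h] <;> omega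
    exact absdet_ge P Q (Wv V σf k') (Wv V σf k') (H.h2b k) hbound (Or.inl rfl)

/-- `|det(V m, V m')| ≥ 2` for `m' ≥ m + 2`. -/
lemma detVV (H : SeqHyp V tf εf σf) (m m' : ℤ) (hm : m + 2 ≤ m') :
    2 ≤ fareyDet (V m) (V m') ∨ fareyDet (V m) (V m') ≤ -2 := by
  set k := m + 1 with hk
  set P := σf k • V k
  set Q := Wv V σf k
  have h2 := H.h2f k
  have hPQ : IsUnit (fareyDet P Q) := IsUnit.of_mul_eq_one _ h2
  rw [Int.isUnit_iff] at hPQ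
  have hVm : V m = (-2:ℤ) • P + (1:ℤ) • Q := by
    show V m = (-2:ℤ) • (σf k • V k) + (1:ℤ) • (V (k - 1) + (2 * σf k) • V k)
    have hk1 : V (k - 1) = V m := by rw [show k - 1 = m from by omega]
    rw [hk1]
    funext i
    simp only [Pi.smul_apply, Pi.add_apply, smul_eq_mul]
    ring
  have hca : ca P Q (V m) = -2 := by rw [hVm, ca_comb, ca_P P Q h2, ca_Q]; ring
  have hcb : cb P Q (V m) = 1 := by rw [hVm, cb_comb, cb_P, cb_Q P Q h2]; ring
  set n : ℕ := (m' - k - 1).toNat with hn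
  have hnn : k + (n:ℤ) + 1 = m' := by omega
  obtain ⟨x, y, hx, hy, hI, -⟩ := H.fwd k n
  rw [hnn] at hy
  have e := coord_det P Q (V m) y h2
  rw [hca, hcb] at e
  have ha : 2 ≤ ca P Q y := hI.2.2.2.2.1
  have hb : 1 ≤ cb P Q y := hI.2.2.2.2.2
  -- e : -2 * cb y - 1 * ca y = det (V m) y * dPQ  ≤ -4
  have hyd : fareyDet (V m) y = fareyDet (V m) (V m') ∨
      fareyDet (V m) y = - fareyDet (V m) (V m') := by
    rcases hy with rfl | hy
    · exact Or.inl rfl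
    · right; rw [hy, fareyDet_neg_right]
  rcases hyd with h | h <;> rw [h] at e <;> rcases hPQ with h' | h' <;> rw [h'] at e <;> omega

/-- forward side of the separation function -/
lemma S_pos (H : SeqHyp V tf εf σf) (k m : ℤ) (hm : k + 1 ≤ m) :
    2 ≤ σf k * Sk V σf k (V m) := by
  set P := σf k • V k with hP
  set Q := Wv V σf k with hQ
  have h2 := H.h2f k
  set n : ℕ := (m - k - 1).toNat with hn
  have hnn : k + (n:ℤ) + 1 = m := by omega
  obtain ⟨x, y, hx, hy, hI, -⟩ := H.fwd k n
  rw [hnn] at hy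
  have key : ca P Q y * cb P Q y = (σf k * Sk V σf k y) * (fareyDet P Q * fareyDet P Q) := by
    simp only [ca, cb, Sk, hP, hQ, fd_smul_left]
    ring
  rw [h2, mul_one] at key
  have hSy : Sk V σf k y = Sk V σf k (V m) := by
    rcases hy with rfl | hy
    · rfl
    · rw [hy, Sk_negx]
  rw [hSy] at key
  have ha : 2 ≤ ca P Q y := hI.2.2.2.2.1
  have hb : 1 ≤ cb P Q y := hI.2.2.2.2.2
  nlinarith

/-- backward side of the separation function -/
lemma S_neg (H : SeqHyp V tf εf σf) (k m : ℤ) (hm : m ≤ k - 1) :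
    σf k * Sk V σf k (V m) ≤ -2 := by
  set P := (-σf k) • V k with hP
  set Q := Wv V σf k with hQ
  have h2 := H.h2b k
  set n : ℕ := (k - 1 - m).toNat with hn
  have hnn : k - (n:ℤ) - 1 = m := by omega
  obtain ⟨x, y, hx, hy, hI, -⟩ := H.bwd k n
  rw [hnn] at hy
  have key : ca P Q y * cb P Q y
      = (-(σf k * Sk V σf k y)) * (fareyDet P Q * fareyDet P Q) := by
    simp only [ca, cb, Sk, hP, hQ, fd_smul_left]
    ring
  rw [h2, mul_one] at key
  have hSy : Sk V σf k y = Sk V σf k (V m) := by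
    rcases hy with rfl | hy
    · rfl
    · rw [hy, Sk_negx]
  rw [hSy] at key
  have ha : 2 ≤ ca P Q y := hI.2.2.2.2.1
  have hb : 1 ≤ cb P Q y := hI.2.2.2.2.2
  nlinarith

end SeqHyp
end FareyAux
namespace FareyAux

lemma adj_mk (x y : PrimVec) :
    Farey.Adj (Quotient.mk fareySetoid x) (Quotient.mk fareySetoid y) ↔
      (fareyDet x.1 y.1 = 1 ∨ fareyDet x.1 y.1 = -1) := Iff.rfl

lemma mk_eq_mk (x y : PrimVec) :
    Quotient.mk fareySetoid x = Quotient.mk fareySetoid y ↔ (x.1 = y.1 ∨ x.1 = -y.1) :=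
  ⟨fun h => Quotient.exact h, fun h => Quotient.sound h⟩

lemma det_lin (B A : ZV) (m : ℤ) : fareyDet B (A + m • B) = fareyDet B A := by
  rw [fd_add_right, fd_smul_right, fd_self]; ring

lemma det_lin2 (B A : ZV) (m σ : ℤ) :
    fareyDet (A + m • B) (A + (m + σ) • B) = - σ * fareyDet B A := by
  simp [fareyDet]; ring

lemma fan_prim (B A : ZV) (hBA : fareyDet B A = 1 ∨ fareyDet B A = -1) (m : ℤ) :
    IsCoprime ((A + m • B) 0) ((A + m • B) 1) :=
  prim_of_det (x := B) (by rw [det_lin]; exact hBA)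

/-- the `m`-th vertex of the fan around `B` starting at `A`, as a vertex
of the induced graph on the neighbours of `B`. -/
def fanV (B A : ZV) (hB : IsCoprime (B 0) (B 1))
    (hBA : fareyDet B A = 1 ∨ fareyDet B A = -1) (m : ℤ) :
    (Farey.neighborSet (Quotient.mk fareySetoid ⟨B, hB⟩) : Set FareyVertex) :=
  ⟨Quotient.mk fareySetoid ⟨A + m • B, fan_prim B A hBA m⟩, by
    show fareyDet B (A + m • B) = 1 ∨ fareyDet B (A + m • B) = -1
    rw [det_lin]
    exact hBA⟩

lemma fan_adj (B A : ZV) (hB : IsCoprime (B 0) (B 1))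
    (hBA : fareyDet B A = 1 ∨ fareyDet B A = -1) (m σ : ℤ) (hσ : σ = 1 ∨ σ = -1) :
    (Farey.induce (Farey.neighborSet (Quotient.mk fareySetoid ⟨B, hB⟩))).Adj
      (fanV B A hB hBA m) (fanV B A hB hBA (m + σ)) := by
  rw [SimpleGraph.comap_adj]
  show Farey.Adj (Quotient.mk fareySetoid _) (Quotient.mk fareySetoid _)
  refine (adj_mk _ _).mpr ?_
  show fareyDet (A + m • B) (A + (m + σ) • B) = 1 ∨ _ = -1
  rw [det_lin2]
  rcases hσ with h | h <;> rcases hBA with h' | h' <;> rw [h, h'] <;> omega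

lemma fan_walk (B A : ZV) (hB : IsCoprime (B 0) (B 1))
    (hBA : fareyDet B A = 1 ∨ fareyDet B A = -1)
    (σ : ℤ) (hσ : σ = 1 ∨ σ = -1) (r : ℕ) : ∀ (m : ℤ),
    ∃ w : (Farey.induce (Farey.neighborSet (Quotient.mk fareySetoid ⟨B, hB⟩))).Walk
      (fanV B A hB hBA m) (fanV B A hB hBA (m + σ * r)), w.length = r := by
  induction r with
  | zero =>
    intro m
    refine ⟨SimpleGraph.Walk.nil.copy rfl (congrArg _ (by push_cast; ring)), ?_⟩
    simp [SimpleGraph.Walk.length_copy]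
  | succ r ih =>
    intro m
    obtain ⟨w, hw⟩ := ih m
    refine ⟨(w.concat (fan_adj B A hB hBA (m + σ * r) σ hσ)).copy rfl
      (congrArg _ (by push_cast; ring)), ?_⟩
    simp [SimpleGraph.Walk.length_copy, SimpleGraph.Walk.length_concat, hw]

/-- key upper bound used to extract turning numbers:
`dist (A, ±(A + t B)) ≤ |t|` inside the link of `B`. -/
lemma fan_dist (B A : ZV) (hB : IsCoprime (B 0) (B 1))
    (hBA : fareyDet B A = 1 ∨ fareyDet B A = -1) (t : ℤ) (x y : FareyVertex)
    (hx : x = Quotient.mk fareySetoid ⟨A + (0:ℤ) • B, fan_prim B A hBA 0⟩)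
    (hy : y = Quotient.mk fareySetoid ⟨A + t • B, fan_prim B A hBA t⟩)
    (h₁ : x ∈ Farey.neighborSet (Quotient.mk fareySetoid ⟨B, hB⟩))
    (h₂ : y ∈ Farey.neighborSet (Quotient.mk fareySetoid ⟨B, hB⟩)) :
    (Farey.induce (Farey.neighborSet (Quotient.mk fareySetoid ⟨B, hB⟩))).dist
      ⟨x, h₁⟩ ⟨y, h₂⟩ ≤ t.natAbs := by
  subst hx
  subst hy
  have hex : ∃ σ : ℤ, (σ = 1 ∨ σ = -1) ∧ (0:ℤ) + σ * t.natAbs = t := by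
    rcases le_or_gt 0 t with h | h
    · exact ⟨1, Or.inl rfl, by omega⟩
    · exact ⟨-1, Or.inr rfl, by omega⟩
  obtain ⟨σ, hσ, hσt⟩ := hex
  obtain ⟨w, hw⟩ := fan_walk B A hB hBA σ hσ t.natAbs 0
  have e1 : (⟨Quotient.mk fareySetoid ⟨A + (0:ℤ) • B, fan_prim B A hBA 0⟩, h₁⟩ :
      (Farey.neighborSet (Quotient.mk fareySetoid ⟨B, hB⟩) : Set FareyVertex))
      = fanV B A hB hBA 0 := Subtype.ext rfl
  have e2 : (⟨Quotient.mk fareySetoid ⟨A + t • B, fan_prim B A hBA t⟩, h₂⟩ :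
      (Farey.neighborSet (Quotient.mk fareySetoid ⟨B, hB⟩) : Set FareyVertex))
      = fanV B A hB hBA ((0:ℤ) + σ * t.natAbs) := by
    rw [show ((0:ℤ) + σ * t.natAbs) = t from hσt]
    exact Subtype.ext rfl
  rw [e1, e2]
  exact le_trans (SimpleGraph.dist_le w) (le_of_eq hw)

/-- crossing lemma for integer sequences -/
lemma exists_zero (f : ℕ → ℤ) (n : ℕ)
    (hstep : ∀ r, r < n → ¬ (f r * f (r + 1) < 0))
    (hends : f 0 * f n < 0) : ∃ r ≤ n, f r = 0 := by
  by_contra hz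
  push_neg at hz
  have key : ∀ r, r ≤ n → 0 < f 0 * f r := by
    intro r hr
    induction r with
    | zero => exact mul_self_pos.mpr (hz 0 (by omega))
    | succ r ih =>
      have h1 := ih (by omega)
      have h2 := hstep r (by omega)
      have h3 : f r * f (r + 1) ≠ 0 :=
        mul_ne_zero (hz r (by omega)) (hz (r + 1) (by omega))
      have h4 : 0 < f r * f (r + 1) := by omega
      have h5 : 0 < f r * f r := mul_self_pos.mpr (hz r (by omega))
      nlinarith [mul_pos h1 h4]
  exact absurd (key n le_rfl) (by omega)

end FareyAux
open FareyAux FareyAux.SeqHyp in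
theorem farey_unique_geodesic_of_turning_ge_four (v : ℤ → FareyVertex)
    (hadj : ∀ i : ℤ, Farey.Adj (v i) (v (i + 1)))
    (hne : ∀ i : ℤ, v (i - 1) ≠ v (i + 1))
    (hturn : ∀ i : ℤ, ∀ h₁ : v (i - 1) ∈ Farey.neighborSet (v i),
      ∀ h₂ : v (i + 1) ∈ Farey.neighborSet (v i),
      4 ≤ (Farey.induce (Farey.neighborSet (v i))).dist ⟨v (i - 1), h₁⟩ ⟨v (i + 1), h₂⟩) :
    ∀ i j : ℤ, i < j → ∀ p : Farey.Walk (v i) (v j),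
      p.length = (j - i).toNat → ∀ k : ℕ, k ≤ p.length → p.getVert k = v (i + k) := by
  classical
  intro i j hij p hlen
  -- canonical representatives
  set V : ℤ → ZV := fun m => ((v m).out).1 with hVdef
  have hprim : ∀ m, IsCoprime (V m 0) (V m 1) := fun m => ((v m).out).2
  have hmkV : ∀ m, Quotient.mk fareySetoid ⟨V m, hprim m⟩ = v m := fun m =>
    Quotient.out_eq (v m)
  have hdet : ∀ m : ℤ, fareyDet (V m) (V (m + 1)) = 1 ∨ fareyDet (V m) (V (m + 1)) = -1 := by
    intro m
    have h := hadj m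
    rw [← hmkV m, ← hmkV (m + 1)] at h
    exact (adj_mk _ _).mp h
  -- extraction of the turning numbers
  have hturnex : ∀ k : ℤ, ∃ ε t : ℤ, (ε = 1 ∨ ε = -1) ∧ (4 ≤ t ∨ t ≤ -4) ∧
      V (k + 1) = ε • (V (k - 1) + t • V k) := by
    intro k
    have h1 : fareyDet (V (k - 1)) (V k) = 1 ∨ fareyDet (V (k - 1)) (V k) = -1 := by
      have := hdet (k - 1); rwa [show k - 1 + 1 = k from by ring] at this
    have h1' : fareyDet (V k) (V (k - 1)) = 1 ∨ fareyDet (V k) (V (k - 1)) = -1 := by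
      rw [fd_swap]; omega
    have hcr := cramer (V (k - 1)) (V k) (V (k + 1)) h1
    have h2 := hdet k
    set ε := fareyDet (V (k - 1)) (V k) * fareyDet (V (k + 1)) (V k) with hεd
    set τ := fareyDet (V (k - 1)) (V k) * fareyDet (V (k - 1)) (V (k + 1)) with hτd
    have hε1 : ε = 1 ∨ ε = -1 := by
      have h3 : fareyDet (V (k + 1)) (V k) = - fareyDet (V k) (V (k + 1)) := fd_swap _ _
      rcases h1 with ha | ha <;> rcases h2 with hb | hb <;> rw [hεd, ha] <;> omega
    have hε2 : ε * ε = 1 := by rcases hε1 with h | h <;> rw [h] <;> ring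
    have hC : V (k + 1) = ε • (V (k - 1) + (ε * τ) • V k) := by
      funext idx
      have hcri := congrFun hcr idx
      simp only [Pi.smul_apply, Pi.add_apply, smul_eq_mul] at hcri ⊢
      linear_combination hcri + (-(τ * V k idx)) * hε2
    refine ⟨ε, ε * τ, hε1, ?_, hC⟩
    by_contra hsmall
    push_neg at hsmall
    obtain ⟨hs1, hs2⟩ := hsmall
    -- memberships
    have h₁ : v (k - 1) ∈ Farey.neighborSet (v k) := by
      rw [SimpleGraph.mem_neighborSet]
      have := hadj (k - 1)
      rw [show k - 1 + 1 = k from by ring] at this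
      exact this.symm
    have h₂ : v (k + 1) ∈ Farey.neighborSet (v k) := by
      rw [SimpleGraph.mem_neighborSet]; exact hadj k
    have h4 := hturn k h₁ h₂
    generalize hgen : v k = u at h₁ h₂ h4
    have hu : Quotient.mk fareySetoid ⟨V k, hprim k⟩ = u := (hmkV k).trans hgen
    subst hu
    have hx : v (k - 1) = Quotient.mk fareySetoid
        ⟨V (k - 1) + (0:ℤ) • V k, fan_prim (V k) (V (k - 1)) h1' 0⟩ := by
      rw [← hmkV (k - 1)]
      exact Quotient.sound (Or.inl (by simp))
    have hy : v (k + 1) = Quotient.mk fareySetoid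
        ⟨V (k - 1) + (ε * τ) • V k, fan_prim (V k) (V (k - 1)) h1' (ε * τ)⟩ := by
      rw [← hmkV (k + 1)]
      refine Quotient.sound ?_
      show V (k + 1) = _ ∨ V (k + 1) = _
      rcases hε1 with h | h
      · left; rw [hC, h, one_smul]
      · right; rw [hC, h, neg_one_smul]
    have hd := fan_dist (V k) (V (k - 1)) (hprim k) h1' (ε * τ) (v (k - 1)) (v (k + 1))
      hx hy h₁ h₂
    have : (ε * τ).natAbs ≤ 3 := by omega
    omega
  choose εf tf hεf htf hrecf using hturnex
  set σf : ℤ → ℤ := fun m => if 0 ≤ tf m then 1 else -1 with hσfdef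
  have H : SeqHyp V tf εf σf := by
    refine ⟨hdet, hrecf, hεf, ?_, ?_⟩
    · intro m; rw [hσfdef]; dsimp only; split
      · exact Or.inl rfl
      · exact Or.inr rfl
    · intro m; rw [hσfdef]; dsimp only
      have := htf m
      split <;> omega
  -- the fan vertices as Farey vertices
  have hprimW : ∀ k, IsCoprime (Wv V σf k 0) (Wv V σf k 1) := fun k =>
    prim_of_det (H.detVW1 k)
  set Wb : ℤ → FareyVertex := fun k => Quotient.mk fareySetoid ⟨Wv V σf k, hprimW k⟩
    with hWbdef
  -- walk data
  set n := p.length with hn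
  have hjn : j = i + n := by omega
  have g0 : p.getVert 0 = v i := SimpleGraph.Walk.getVert_zero p
  have gn : p.getVert n = v j := by rw [hn]; exact SimpleGraph.Walk.getVert_length p
  have gadj : ∀ r, r < n → Farey.Adj (p.getVert r) (p.getVert (r + 1)) := fun r hr =>
    SimpleGraph.Walk.adj_getVert_succ p (by omega)
  set X : ℕ → ZV := fun r => ((p.getVert r).out).1 with hXdef
  have hXprim : ∀ r, IsCoprime (X r 0) (X r 1) := fun r => (p.getVert r).out.2
  have hmkX : ∀ r, Quotient.mk fareySetoid ⟨X r, hXprim r⟩ = p.getVert r := fun r =>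
    Quotient.out_eq _
  have hXdet : ∀ r, r < n → (fareyDet (X r) (X (r + 1)) = 1 ∨
      fareyDet (X r) (X (r + 1)) = -1) := by
    intro r hr
    have h := gadj r hr
    rw [← hmkX r, ← hmkX (r + 1)] at h
    exact (adj_mk _ _).mp h
  have hX0 : X 0 = V i := by show ((p.getVert 0).out).1 = _; rw [g0]
  have hXn : X n = V j := by show ((p.getVert n).out).1 = _; rw [gn]
  -- Claim 1 : the walk crosses every separator
  have claim1 : ∀ k : ℤ, i < k → k < j →
      ∃ r ≤ n, p.getVert r = v k ∨ p.getVert r = Wb k := by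
    intro k hk1 hk2
    have h2Q : fareyDet (V k) (Wv V σf k) * fareyDet (V k) (Wv V σf k) = 1 := by
      rcases H.detVW1 k with h | h <;> rw [h] <;> ring
    set f : ℕ → ℤ := fun r => fareyDet (X r) (Wv V σf k) * fareyDet (V k) (X r) with hfdef
    have hf0 : f 0 = Sk V σf k (V i) := by rw [hfdef]; dsimp only; rw [hX0]; rfl
    have hfn : f n = Sk V σf k (V j) := by rw [hfdef]; dsimp only; rw [hXn]; rfl
    have hneg := H.S_neg k i (by omega)
    have hpos := H.S_pos k j (by omega)
    have hends : f 0 * f n < 0 := by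
      rw [hf0, hfn]
      rcases H.hσ k with h | h <;> rw [h] at hneg hpos
      · exact mul_neg_of_neg_of_pos (by omega) (by omega)
      · exact mul_neg_of_pos_of_neg (by omega) (by omega)
    have hstep : ∀ r, r < n → ¬ (f r * f (r + 1) < 0) := by
      intro r hr hcon
      exact sep_jump (V k) (Wv V σf k) (X r) (X (r + 1)) h2Q (hXdet r hr) hcon
    obtain ⟨r, hrn, hr0⟩ := exists_zero f n hstep hends
    refine ⟨r, hrn, ?_⟩
    rcases mul_eq_zero.mp hr0 with h | h
    · right
      have hpar := eq_or_neg_of_det_zero (hXprim r) (hprimW k) h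
      have hrel : Quotient.mk fareySetoid ⟨X r, hXprim r⟩
          = Quotient.mk fareySetoid ⟨Wv V σf k, hprimW k⟩ :=
        Quotient.sound (by
          rcases hpar with h' | h'
          · left; show X r = Wv V σf k; rw [h']
          · right; show X r = -(Wv V σf k); rw [h']; simp)
      exact (hmkX r).symm.trans hrel
    · left
      have h' : fareyDet (X r) (V k) = 0 := by rw [fd_swap]; omega
      have hpar := eq_or_neg_of_det_zero (hXprim r) (hprim k) h'
      have hrel : Quotient.mk fareySetoid ⟨X r, hXprim r⟩
          = Quotient.mk fareySetoid ⟨V k, hprim k⟩ :=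
        Quotient.sound (by
          rcases hpar with h' | h'
          · left; show X r = V k; rw [h']
          · right; show X r = -(V k); rw [h']; simp)
      exact (hmkX r).symm.trans (hrel.trans (hmkV k))
  -- class-level distinctness and adjacency facts
  have eqclass : ∀ (x y : ZV) (hx : IsCoprime (x 0) (x 1)) (hy : IsCoprime (y 0) (y 1)),
      Quotient.mk fareySetoid ⟨x, hx⟩ = Quotient.mk fareySetoid ⟨y, hy⟩ →
      fareyDet x y = 0 := by
    intro x y hx hy he
    have := Quotient.exact he
    rcases this with h | h
    · have : x = y := h
      rw [this, fd_self]
    · have : x = -y := h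
      rw [this, fareyDet_neg_left, fd_self, neg_zero]
  have vne : ∀ m m' : ℤ, m < m' → v m ≠ v m' := by
    intro m m' hmm' he
    rcases eq_or_lt_of_le (show m + 1 ≤ m' from by omega) with h | h
    · rw [← h] at he
      exact (Farey.loopless.irrefl (v m)) (he ▸ hadj m)
    · have hd := H.detVV m m' (by omega)
      rw [← hmkV m, ← hmkV m'] at he
      have := eqclass _ _ _ _ he
      omega
  have vne' : ∀ m m' : ℤ, m ≠ m' → v m ≠ v m' := by
    intro m m' hmm'
    rcases lt_or_gt_of_ne hmm' with h | h
    · exact vne m m' h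
    · exact (vne m' m h).symm
  have WbneV : ∀ k m : ℤ, Wb k ≠ v m := by
    intro k m he
    by_cases hmk : m = k
    · subst hmk
      rw [← hmkV m] at he
      have := eqclass _ _ _ _ he
      rw [fd_swap] at this
      have h2 := H.detVW1 m
      omega
    · have hd := H.detWV k m hmk
      rw [← hmkV m] at he
      have := eqclass _ _ _ _ he
      omega
  have WbneW : ∀ k k' : ℤ, k ≠ k' → Wb k ≠ Wb k' := by
    intro k k' hkk' he
    have hd := H.detWW k k' hkk'
    have := eqclass _ _ _ _ he
    omega
  have adjWV : ∀ k m : ℤ, Farey.Adj (Wb k) (v m) → m = k := by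
    intro k m hA
    by_contra hmk
    have hd := H.detWV k m hmk
    rw [← hmkV m] at hA
    have h' : fareyDet (Wv V σf k) (V m) = 1 ∨ fareyDet (Wv V σf k) (V m) = -1 :=
      (adj_mk _ _).mp hA
    omega
  have adjWW : ∀ k k' : ℤ, k ≠ k' → ¬ Farey.Adj (Wb k) (Wb k') := by
    intro k k' hkk' hA
    have hd := H.detWW k k' hkk'
    have h' : fareyDet (Wv V σf k) (Wv V σf k') = 1 ∨
        fareyDet (Wv V σf k) (Wv V σf k') = -1 := (adj_mk _ _).mp hA
    omega
  have adjVV : ∀ m m' : ℤ, Farey.Adj (v m) (v m') → (m' = m + 1 ∨ m = m' + 1) := by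
    intro m m' hA
    by_contra hcon
    push_neg at hcon
    obtain ⟨hc1, hc2⟩ := hcon
    rcases lt_trichotomy m m' with h | h | h
    · have hd := H.detVV m m' (by omega)
      rw [← hmkV m, ← hmkV m'] at hA
      have h' : fareyDet (V m) (V m') = 1 ∨ fareyDet (V m) (V m') = -1 :=
        (adj_mk _ _).mp hA
      omega
    · subst h
      exact (Farey.loopless.irrefl (v m)) hA
    · have hd := H.detVV m' m (by omega)
      rw [← hmkV m, ← hmkV m'] at hA
      have h' : fareyDet (V m') (V m) = 1 ∨ fareyDet (V m') (V m) = -1 :=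
        (adj_mk _ _).mp hA.symm
      omega
  -- the selection of crossing positions
  have hsel : ∀ k : ℤ, i < k → k < j →
      ∃ r : ℕ, (0 < r ∧ r < n) ∧ (p.getVert r = v k ∨ p.getVert r = Wb k) := by
    intro k hik hkj
    obtain ⟨r, hrn, hr⟩ := claim1 k hik hkj
    refine ⟨r, ⟨?_, ?_⟩, hr⟩
    · rcases Nat.eq_zero_or_pos r with h | h
      · exfalso
        rw [h, g0] at hr
        rcases hr with hr | hr
        · exact vne i k hik hr
        · exact WbneV k i hr.symm
      · exact h
    · rcases eq_or_lt_of_le hrn with h | h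
      · exfalso
        rw [h, gn] at hr
        rcases hr with hr | hr
        · exact vne k j hkj hr.symm
        · exact WbneV k j hr.symm
      · exact h
  choose! rsel hrsel hrval using hsel
  -- interior positions are exactly selected
  have hsurj : ∀ r : ℕ, 0 < r → r < n → ∃ k : ℤ, (i < k ∧ k < j) ∧ rsel k = r := by
    intro r h0 h1
    have hinj : ∀ k₁ k₂ (h₁ : k₁ ∈ Finset.Ioo i j) (h₂ : k₂ ∈ Finset.Ioo i j),
        (fun (k : ℤ) (_ : k ∈ Finset.Ioo i j) => rsel k) k₁ h₁
          = (fun (k : ℤ) (_ : k ∈ Finset.Ioo i j) => rsel k) k₂ h₂ → k₁ = k₂ := by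
      intro k₁ k₂ h₁ h₂ he
      dsimp only at he
      rw [Finset.mem_Ioo] at h₁ h₂
      by_contra hkk
      have e₁ := hrval k₁ h₁.1 h₁.2
      have e₂ := hrval k₂ h₂.1 h₂.2
      rw [he] at e₁
      rcases e₁ with e₁ | e₁ <;> rcases e₂ with e₂ | e₂ <;> rw [e₁] at e₂
      · exact vne' k₂ k₁ (Ne.symm hkk) e₂.symm
      · exact WbneV k₂ k₁ e₂.symm
      · exact WbneV k₁ k₂ e₂
      · exact WbneW k₂ k₁ (Ne.symm hkk) e₂.symm
    have hmaps : ∀ k (hk : k ∈ Finset.Ioo i j),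
        (fun (k : ℤ) (_ : k ∈ Finset.Ioo i j) => rsel k) k hk ∈ Finset.Ioo 0 n := by
      intro k hk
      rw [Finset.mem_Ioo] at hk ⊢
      exact hrsel k hk.1 hk.2
    have hcard : (Finset.Ioo (0:ℕ) n).card ≤ (Finset.Ioo i j).card := by
      rw [Nat.card_Ioo, Int.card_Ioo]
      omega
    obtain ⟨k, hk, hke⟩ := Finset.surj_on_of_inj_on_of_card_le _ hmaps hinj hcard r
      (Finset.mem_Ioo.mpr ⟨h0, h1⟩)
    rw [Finset.mem_Ioo] at hk
    exact ⟨k, hk, hke.symm⟩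
  -- the walk never uses a fan vertex
  have hWnot : ∀ k : ℤ, i < k → k < j → p.getVert (rsel k) = v k := by
    intro k hik hkj
    rcases hrval k hik hkj with h | h
    · exact h
    · exfalso
      obtain ⟨hp0, hpn⟩ := hrsel k hik hkj
      have hadj1 : Farey.Adj (p.getVert (rsel k - 1)) (p.getVert (rsel k)) := by
        have := gadj (rsel k - 1) (by omega)
        rwa [show rsel k - 1 + 1 = rsel k from by omega] at this
      rw [h] at hadj1
      have hcase : rsel k - 1 = 0 ∨ (0 < rsel k - 1 ∧ rsel k - 1 < n) := by omega
      rcases hcase with h0 | ⟨ha, hb⟩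
      · rw [h0, g0] at hadj1
        have := adjWV k i hadj1.symm
        omega
      · obtain ⟨k', ⟨hk'1, hk'2⟩, hk'r⟩ := hsurj (rsel k - 1) ha hb
        rcases hrval k' hk'1 hk'2 with e | e <;> rw [hk'r] at e <;> rw [e] at hadj1
        · have := adjWV k k' hadj1.symm
          subst this
          omega
        · by_cases hkk : k' = k
          · subst hkk
            omega
          · exact adjWW k' k hkk hadj1
  -- conclusion by induction along the walk
  have final : ∀ r : ℕ, r ≤ n → p.getVert r = v (i + r) := by
    intro r
    induction r using Nat.strong_induction_on with
    | _ r ih =>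
      intro hr
      match r, ih with
      | 0, _ => rw [show (i + ((0:ℕ):ℤ)) = i from by push_cast; ring]; exact g0
      | (r' + 1), ih =>
        have e1 := ih r' (by omega) (by omega)
        have hA := gadj r' (by omega)
        rw [e1] at hA
        rcases eq_or_lt_of_le (show r' + 1 ≤ n from hr) with hend | hlt
        · rw [hend, gn]
          exact congrArg v (by omega)
        · obtain ⟨k', ⟨hk'1, hk'2⟩, hk'r⟩ := hsurj (r' + 1) (by omega) hlt
          have e2 : p.getVert (r' + 1) = v k' := by
            rw [← hk'r]; exact hWnot k' hk'1 hk'2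
          rw [e2] at hA
          rcases adjVV _ _ hA with hgood | hbad
          · rw [e2, hgood]
            exact congrArg v (by push_cast; ring)
          · exfalso
            -- k' = i + r' - 1
            rcases Nat.eq_zero_or_pos r' with h0 | hpos
            · subst h0
              simp only [Nat.cast_zero, add_zero] at hbad
              omega
            · have e0 := ih (r' - 1) (by omega) (by omega)
              have hidx : (i + ((r' - 1 : ℕ):ℤ)) = k' := by
                push_cast [Nat.cast_sub (by omega : 1 ≤ r')]
                omega
              rw [hidx] at e0
              rcases Nat.eq_zero_or_pos (r' - 1) with hz | hz
              · rw [hz, g0] at e0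
                exact vne i k' (by omega) e0
              · obtain ⟨k'', ⟨hk''1, hk''2⟩, hk''r⟩ := hsurj (r' - 1) hz (by omega)
                have e3 : p.getVert (r' - 1) = v k'' := by
                  rw [← hk''r]; exact hWnot k'' hk''1 hk''2
                rw [e3] at e0
                have : k'' = k' := by
                  by_contra hne'
                  exact vne' k'' k' hne' e0
                subst this
                omega
  intro r hrle
  exact final r (by omega)
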